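/- Let n ≥ 1 and let σ be a permutation of Fin n satisfying ℓ(σ) + ℓ(σ⁻¹ * s) = n − 1, where s is the n-cycle i ↦ i + 1 (mod n). Then σ is a noncrossing permutation: its orbit partition is noncrossing and each cycle of σ is written in numerically increasing order. -/

import Mathlib

set_option linter.unusedSectionVars false

open Equiv Equiv.Perm

/-- Minimal number of transpositions whose product is `σ` (0 for the identity);
this is the graph distance from the identity to `σ` in the Cayley graph of the
symmetric group on `Fin n` generated by all transpositions. -/
noncomputable def swapLength (n : ℕ) (σ : Equiv.Perm (Fin n)) : ℕ :=
  sInf {k | ∃ l : List (Equiv.Perm (Fin n)),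
    l.length = k ∧ (∀ t ∈ l, t.IsSwap) ∧ l.prod = σ}

/-- A permutation of `Fin n` is noncrossing if (i) its orbits form a noncrossing
partition and (ii) each cycle of `σ` is written in numerically increasing order:
`σ i` is the least element of the orbit of `i` strictly greater than `i` when such
an element exists, and otherwise the least element of the orbit of `i`. -/
def IsNoncrossingPerm {n : ℕ} (σ : Equiv.Perm (Fin n)) : Prop :=
  (∀ i j k l : Fin n, i < j → j < k → k < l →
      σ.SameCycle i k → σ.SameCycle j l → σ.SameCycle i j) ∧
  (∀ i : Fin n,
    ((∃ j, σ.SameCycle i j ∧ i < j) →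
        IsLeast {j | σ.SameCycle i j ∧ i < j} (σ i)) ∧
    (¬ (∃ j, σ.SameCycle i j ∧ i < j) →
        IsLeast {j | σ.SameCycle i j} (σ i)))



namespace NCAux

variable {α : Type*} [DecidableEq α] [Fintype α]

lemma path_pow (σ : Perm α) (x y a : α) : ∀ m : ℕ,
    (∀ j < m, (σ ^ j) a ≠ x ∧ (σ ^ j) a ≠ y) →
    ((σ * Equiv.swap x y) ^ m) a = (σ ^ m) a
  | 0, _ => by simp
  | (m+1), h => by
    rw [pow_succ', pow_succ', Perm.mul_apply, Perm.mul_apply,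
      path_pow σ x y a m (fun j hj => h j (hj.trans m.lt_succ_self)), Perm.mul_apply,
      Equiv.swap_apply_of_ne_of_ne (h m m.lt_succ_self).1 (h m m.lt_succ_self).2]

lemma tau_pow_x (σ : Perm α) (x y : α) (m : ℕ)
    (h : ∀ j, 0 < j → j < m → (σ ^ j) y ≠ x ∧ (σ ^ j) y ≠ y) :
    ((σ * Equiv.swap x y) ^ m) x = (σ ^ m) y ∨ m = 0 := by
  cases m with
  | zero => exact Or.inr rfl
  | succ k =>
    left
    have h1 : ((σ * Equiv.swap x y)) x = σ y := by
      simp [Perm.mul_apply]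
    rw [pow_succ, Perm.mul_apply, h1]
    have := path_pow σ x y (σ y) k (fun j hj => by
      have h2 := h (j+1) (Nat.succ_pos j) (by omega)
      rwa [pow_succ, Perm.mul_apply] at h2)
    rw [this, ← Perm.mul_apply, ← pow_succ]

lemma sc_of_pow {σ : Perm α} {a b : α} {m : ℕ} (h : (σ ^ m) a = b) : σ.SameCycle a b :=
  ⟨(m : ℤ), by rw [zpow_natCast]; exact h⟩

lemma sameCycle_mul_swap_of_not {σ : Perm α} {x y : α} (hxy : x ≠ y)
    (hns : ¬ σ.SameCycle x y) : (σ * Equiv.swap x y).SameCycle x y := by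
  have hex : ∃ m : ℕ, (σ ^ (m+1)) y = y := by
    refine ⟨orderOf σ - 1, ?_⟩
    have h1 : 0 < orderOf σ := orderOf_pos σ
    have : σ ^ (orderOf σ - 1 + 1) = 1 := by
      rw [Nat.sub_add_cancel h1, pow_orderOf_eq_one]
    simp [this]
  set p := Nat.find hex + 1 with hp
  have hpy : (σ ^ p) y = y := Nat.find_spec hex
  have hmin : ∀ j, 0 < j → j < p → (σ ^ j) y ≠ x ∧ (σ ^ j) y ≠ y := by
    intro j hj0 hjp
    constructor
    · intro hjx
      exact hns ((sc_of_pow hjx).symm)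
    · intro hjy
      have : j - 1 < Nat.find hex := by omega
      exact Nat.find_min hex this (by rwa [Nat.sub_add_cancel hj0])
  rcases tau_pow_x σ x y p hmin with h | h
  · exact sc_of_pow (h.trans hpy)
  · omega

lemma not_sameCycle_mul_swap {σ : Perm α} {x y : α} (hxy : x ≠ y)
    (hs : σ.SameCycle x y) : ¬ (σ * Equiv.swap x y).SameCycle x y := by
  set τ := σ * Equiv.swap x y with hτ
  have hex : ∃ m : ℕ, (σ ^ (m+1)) y = x := by
    obtain ⟨k, _, hk⟩ := hs.symm.exists_pow_eq'
    have hk0 : k ≠ 0 := by rintro rfl; simp at hk; exact hxy hk.symm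
    exact ⟨k - 1, by rwa [Nat.sub_add_cancel (Nat.pos_of_ne_zero hk0)]⟩
  set i := Nat.find hex + 1 with hi
  have hiy : (σ ^ i) y = x := Nat.find_spec hex
  have hi0 : 0 < i := Nat.succ_pos _
  have hminx : ∀ j, 0 < j → j < i → (σ ^ j) y ≠ x := by
    intro j hj0 hji hjx
    have : j - 1 < Nat.find hex := by omega
    exact Nat.find_min hex this (by rwa [Nat.sub_add_cancel hj0])
  have hmin : ∀ j, 0 < j → j < i → (σ ^ j) y ≠ x ∧ (σ ^ j) y ≠ y := by
    intro j hj0 hji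
    refine ⟨hminx j hj0 hji, fun hjy => ?_⟩
    have : (σ ^ (i - j)) y = x := by
      have : (σ ^ (i - j)) ((σ ^ j) y) = (σ ^ i) y := by
        rw [← Perm.mul_apply, ← pow_add, Nat.sub_add_cancel hji.le]
      rw [hjy] at this; rw [this, hiy]
    exact hminx (i - j) (by omega) (by omega) this
  have htaui : (τ ^ i) x = x := by
    rcases tau_pow_x σ x y i hmin with h | h
    · rw [h, hiy]
    · omega
  have hfix : ∀ q : ℕ, ((τ ^ i) ^ q) x = x := by
    intro q; induction q with
    | zero => simp
    | succ q ih => rw [pow_succ, Perm.mul_apply, htaui, ih]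
  intro hcon
  obtain ⟨k, _, hk⟩ := hcon.exists_pow_eq'
  have hdm : i * (k / i) + k % i = k := Nat.div_add_mod k i
  have hkr : (τ ^ (k % i)) x = y := by
    have h2 : (τ ^ k) x = (τ ^ (k % i)) ((τ ^ (i * (k / i))) x) := by
      rw [← Perm.mul_apply, ← pow_add, add_comm, hdm]
    have h3 : (τ ^ (i * (k / i))) x = x := by rw [pow_mul]; exact hfix _
    rw [h2, h3] at hk; exact hk
  rcases Nat.eq_zero_or_pos (k % i) with h0 | hpos
  · rw [h0] at hkr; simp at hkr; exact hxy hkr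
  · have hlt : k % i < i := Nat.mod_lt _ hi0
    rcases tau_pow_x σ x y (k % i) (fun j hj0 hji => hmin j hj0 (by omega)) with h | h
    · rw [h] at hkr
      exact (hmin (k % i) hpos hlt).2 hkr
    · omega

section MergeChar

variable {σ : Perm α} {x y : α}

/-- the join relation -/
def R (σ : Perm α) (x y a b : α) : Prop :=
  σ.SameCycle a b ∨ (σ.SameCycle a x ∧ σ.SameCycle b y) ∨ (σ.SameCycle a y ∧ σ.SameCycle b x)

lemma mono_mul_swap (hxy : x ≠ y) (hns : ¬ σ.SameCycle x y) {a b : α}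
    (h : σ.SameCycle a b) : (σ * Equiv.swap x y).SameCycle a b := by
  set τ := σ * Equiv.swap x y with hτ
  have hxyτ : τ.SameCycle x y := sameCycle_mul_swap_of_not hxy hns
  have step : ∀ c, τ.SameCycle c (σ c) := by
    intro c
    by_cases hcx : c = x
    · have h2 : τ y = σ x := by simp [hτ, Perm.mul_apply]
      have h3 : τ.SameCycle y (σ x) := sc_of_pow (m := 1) (by simpa using h2)
      rw [hcx]
      exact hxyτ.trans h3
    · by_cases hcy : c = y
      · have h1 : τ x = σ y := by simp [hτ, Perm.mul_apply]
        rw [hcy]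
        exact hxyτ.symm.trans (sc_of_pow (m := 1) (by simpa using h1))
      · exact sc_of_pow (m := 1)
          (by simp [hτ, Perm.mul_apply, Equiv.swap_apply_of_ne_of_ne hcx hcy])
  have pows : ∀ (m : ℕ) (c : α), τ.SameCycle c ((σ ^ m) c) := by
    intro m; induction m with
    | zero => intro c; simpa using SameCycle.refl τ c
    | succ m ih =>
      intro c
      rw [pow_succ, Perm.mul_apply]
      exact (step c).trans (ih (σ c))
  obtain ⟨m, _, hm⟩ := h.exists_pow_eq'
  exact hm ▸ pows m a

lemma merge_char (hxy : x ≠ y) (hns : ¬ σ.SameCycle x y) (a b : α) :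
    (σ * Equiv.swap x y).SameCycle a b ↔ R σ x y a b := by
  set τ := σ * Equiv.swap x y with hτ
  have hxyτ : τ.SameCycle x y := sameCycle_mul_swap_of_not hxy hns
  constructor
  · intro h
    have Rstep : ∀ c, R σ x y c (τ c) := by
      intro c
      rcases eq_or_ne c x with rfl | hcx
      · right; left
        constructor
        · exact SameCycle.refl _ _
        · have : τ c = σ y := by simp [hτ, Perm.mul_apply]
          rw [this]; exact (sameCycle_apply_left).mpr (SameCycle.refl _ _)
      · rcases eq_or_ne c y with rfl | hcy
        · right; right
          constructor
          · exact SameCycle.refl _ _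
          · have : τ c = σ x := by simp [hτ, Perm.mul_apply]
            rw [this]; exact (sameCycle_apply_left).mpr (SameCycle.refl _ _)
        · left
          have : τ c = σ c := by simp [hτ, Perm.mul_apply, Equiv.swap_apply_of_ne_of_ne hcx hcy]
          rw [this]; exact (sameCycle_apply_right).mpr (SameCycle.refl _ _)
    have Rtrans : ∀ {c d e}, R σ x y c d → R σ x y d e → R σ x y c e := by
      rintro c d e (h1 | ⟨h1, h2⟩ | ⟨h1, h2⟩) (g1 | ⟨g1, g2⟩ | ⟨g1, g2⟩)
      · exact Or.inl (h1.trans g1)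
      · exact Or.inr (Or.inl ⟨h1.trans g1, g2⟩)
      · exact Or.inr (Or.inr ⟨h1.trans g1, g2⟩)
      · exact Or.inr (Or.inl ⟨h1, g1.symm.trans h2⟩)
      · exact absurd (g1.symm.trans h2) hns
      · exact Or.inl (h1.trans g2.symm)
      · exact Or.inr (Or.inr ⟨h1, g1.symm.trans h2⟩)
      · exact Or.inl (h1.trans g2.symm)
      · exact absurd (h2.symm.trans g1) hns
    have pows : ∀ (m : ℕ) (c : α), R σ x y c ((τ ^ m) c) := by
      intro m; induction m with
      | zero => intro c; rw [pow_zero, Perm.one_apply]; exact Or.inl (SameCycle.refl σ c)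
      | succ m ih =>
        intro c
        rw [pow_succ, Perm.mul_apply]
        exact Rtrans (Rstep c) (ih (τ c))
    obtain ⟨m, _, hm⟩ := h.exists_pow_eq'
    exact hm ▸ pows m a
  · rintro (h | ⟨h1, h2⟩ | ⟨h1, h2⟩)
    · exact mono_mul_swap hxy hns h
    · exact ((mono_mul_swap hxy hns h1).trans hxyτ).trans (mono_mul_swap hxy hns h2).symm
    · exact ((mono_mul_swap hxy hns h1).trans hxyτ.symm).trans (mono_mul_swap hxy hns h2).symm

end MergeChar

/-- number of orbits (cycles, incl. fixed points) -/
noncomputable def cnt (σ : Perm α) : ℕ := Nat.card (Quotient (SameCycle.setoid σ))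

lemma cnt_inv (σ : Perm α) : cnt σ⁻¹ = cnt σ := by
  have h : SameCycle.setoid σ⁻¹ = SameCycle.setoid σ :=
    Setoid.ext fun a b => sameCycle_inv
  unfold cnt
  rw [h]

lemma mk_surj (σ : Perm α) : Function.Surjective (Quotient.mk (SameCycle.setoid σ)) :=
  Quotient.mk_surjective

lemma cnt_le_card (σ : Perm α) : cnt σ ≤ Fintype.card α := by
  have := Nat.card_le_card_of_surjective _ (mk_surj σ)
  simpa [cnt, Nat.card_eq_fintype_card] using this

lemma cnt_one : cnt (1 : Perm α) = Fintype.card α := by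
  have hinj : Function.Injective (Quotient.mk (SameCycle.setoid (1 : Perm α))) := by
    intro a b h
    exact (sameCycle_one).mp (Quotient.exact h)
  have := Nat.card_eq_of_bijective _ ⟨hinj, mk_surj 1⟩
  simpa [cnt, Nat.card_eq_fintype_card] using this.symm

lemma eq_one_of_cnt (σ : Perm α) (h : Fintype.card α ≤ cnt σ) : σ = 1 := by
  have hb : Function.Bijective (Quotient.mk (SameCycle.setoid σ)) := by
    apply Function.Surjective.bijective_of_nat_card_le (mk_surj σ)
    simpa [cnt, Nat.card_eq_fintype_card] using h
  ext a
  have : Quotient.mk (SameCycle.setoid σ) a = Quotient.mk (SameCycle.setoid σ) (σ a) :=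
    Quotient.sound (sameCycle_apply_right.mpr (SameCycle.refl σ a))
  have := hb.1 this
  simp [← this]

lemma merge_cnt {σ : Perm α} {x y : α} (hxy : x ≠ y) (hns : ¬ σ.SameCycle x y) :
    cnt σ = cnt (σ * Equiv.swap x y) + 1 := by
  classical
  set τ := σ * Equiv.swap x y with hτ
  set Qσ := Quotient (SameCycle.setoid σ)
  set qy : Qσ := Quotient.mk (SameCycle.setoid σ) y with hqy
  have hchar := merge_char hxy hns (σ := σ)
  -- the map
  have wd : ∀ a b : α, (SameCycle.setoid τ).r a b →
      (if σ.SameCycle a x ∨ σ.SameCycle a y then (Quotient.mk (SameCycle.setoid σ) x)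
         else Quotient.mk (SameCycle.setoid σ) a)
      = (if σ.SameCycle b x ∨ σ.SameCycle b y then (Quotient.mk (SameCycle.setoid σ) x)
         else Quotient.mk (SameCycle.setoid σ) b) := by
    intro a b hab
    have hab' : R σ x y a b := (hchar a b).mp hab
    by_cases ha : σ.SameCycle a x ∨ σ.SameCycle a y
    · have hb : σ.SameCycle b x ∨ σ.SameCycle b y := by
        rcases hab' with h | ⟨h1, h2⟩ | ⟨h1, h2⟩
        · rcases ha with h' | h'
          · exact Or.inl (h.symm.trans h')
          · exact Or.inr (h.symm.trans h')
        · exact Or.inr h2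
        · exact Or.inl h2
      rw [if_pos ha, if_pos hb]
    · have hb : ¬ (σ.SameCycle b x ∨ σ.SameCycle b y) := by
        rintro (h' | h')
        · rcases hab' with h | ⟨h1, h2⟩ | ⟨h1, h2⟩
          · exact ha (Or.inl (h.trans h'))
          · exact ha (Or.inl h1)
          · exact ha (Or.inr h1)
        · rcases hab' with h | ⟨h1, h2⟩ | ⟨h1, h2⟩
          · exact ha (Or.inr (h.trans h'))
          · exact ha (Or.inl h1)
          · exact ha (Or.inr h1)
      rw [if_neg ha, if_neg hb]
      apply Quotient.sound
      rcases hab' with h | ⟨h1, h2⟩ | ⟨h1, h2⟩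
      · exact h
      · exact absurd (Or.inl h1) ha
      · exact absurd (Or.inr h1) ha
  set ψ : Quotient (SameCycle.setoid τ) → Qσ :=
    Quotient.lift (fun a => if σ.SameCycle a x ∨ σ.SameCycle a y
      then (Quotient.mk (SameCycle.setoid σ) x) else Quotient.mk (SameCycle.setoid σ) a) wd
    with hψ
  have hψmk : ∀ a : α, ψ (Quotient.mk (SameCycle.setoid τ) a)
      = if σ.SameCycle a x ∨ σ.SameCycle a y then (Quotient.mk (SameCycle.setoid σ) x)
        else Quotient.mk (SameCycle.setoid σ) a := fun a => rfl
  have hinj : Function.Injective ψ := by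
    intro qa qb
    induction qa using Quotient.inductionOn with | h a =>
    induction qb using Quotient.inductionOn with | h b =>
    intro h
    rw [hψmk, hψmk] at h
    apply Quotient.sound
    show τ.SameCycle a b
    by_cases ha : σ.SameCycle a x ∨ σ.SameCycle a y
    · by_cases hb : σ.SameCycle b x ∨ σ.SameCycle b y
      · have hax : τ.SameCycle a x := by
          rcases ha with h' | h'
          · exact mono_mul_swap hxy hns h'
          · exact (mono_mul_swap hxy hns h').trans (sameCycle_mul_swap_of_not hxy hns).symm
        have hbx : τ.SameCycle b x := by
          rcases hb with h' | h'
          · exact mono_mul_swap hxy hns h'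
          · exact (mono_mul_swap hxy hns h').trans (sameCycle_mul_swap_of_not hxy hns).symm
        exact hax.trans hbx.symm
      · rw [if_pos ha, if_neg hb] at h
        exact absurd (Quotient.exact h).symm (fun hc => hb (Or.inl hc))
    · by_cases hb : σ.SameCycle b x ∨ σ.SameCycle b y
      · rw [if_neg ha, if_pos hb] at h
        exact absurd (Quotient.exact h) (fun hc => ha (Or.inl hc))
      · rw [if_neg ha, if_neg hb] at h
        exact mono_mul_swap hxy hns (Quotient.exact h)
  have hrange : ∀ q : Qσ, q ≠ qy → ∃ p, ψ p = q := by
    intro q hq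
    induction q using Quotient.inductionOn with | h b =>
    have hby : ¬ σ.SameCycle b y := fun hc => hq (Quotient.sound hc)
    by_cases hbx : σ.SameCycle b x
    · refine ⟨Quotient.mk (SameCycle.setoid τ) x, ?_⟩
      rw [hψmk, if_pos (Or.inl (SameCycle.refl σ x))]
      exact Quotient.sound hbx.symm
    · refine ⟨Quotient.mk (SameCycle.setoid τ) b, ?_⟩
      rw [hψmk, if_neg (by rintro (h|h); exacts [hbx h, hby h])]
  have hnoty : ∀ p, ψ p ≠ qy := by
    intro p
    induction p using Quotient.inductionOn with | h a =>
    rw [hψmk]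
    by_cases ha : σ.SameCycle a x ∨ σ.SameCycle a y
    · rw [if_pos ha]
      intro hc
      exact hns (Quotient.exact hc)
    · rw [if_neg ha]
      intro hc
      exact ha (Or.inr (Quotient.exact hc))
  -- build bijection onto the subtype
  have hbij : Function.Bijective (fun p => (⟨ψ p, hnoty p⟩ : {q : Qσ // q ≠ qy})) := by
    constructor
    · intro p p' h
      exact hinj (congrArg Subtype.val h)
    · rintro ⟨q, hq⟩
      obtain ⟨p, hp⟩ := hrange q hq
      exact ⟨p, Subtype.ext hp⟩
  have h1 : cnt τ = Nat.card {q : Qσ // q ≠ qy} := Nat.card_eq_of_bijective _ hbij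
  have h2 : Nat.card Qσ = Nat.card {q : Qσ // q ≠ qy} + 1 := by
    rw [← Nat.card_congr (Equiv.optionSubtypeNe qy), Finite.card_option]
  show Nat.card Qσ = cnt τ + 1
  rw [h1, h2]

lemma split_cnt {σ : Perm α} {x y : α} (hxy : x ≠ y) (hs : σ.SameCycle x y) :
    cnt (σ * Equiv.swap x y) = cnt σ + 1 := by
  have h1 := merge_cnt hxy (not_sameCycle_mul_swap hxy hs)
  rw [mul_assoc, Equiv.swap_mul_self, mul_one] at h1
  exact h1

lemma cnt_mul_swap_ge {σ : Perm α} {x y : α} (hxy : x ≠ y) :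
    cnt σ ≤ cnt (σ * Equiv.swap x y) + 1 := by
  by_cases hs : σ.SameCycle x y
  · rw [split_cnt hxy hs]; omega
  · rw [merge_cnt hxy hs]


lemma card_le_of_swap_list (l : List (Perm α)) (h : ∀ t ∈ l, t.IsSwap) :
    Fintype.card α ≤ cnt l.prod + l.length := by
  induction l with
  | nil => simp [cnt_one]
  | cons t l ih =>
    obtain ⟨x, y, hxy, rfl⟩ := h t (List.mem_cons_self)
    have ih' := ih (fun t ht => h t (List.mem_cons_of_mem _ ht))
    have key : cnt l.prod ≤ cnt (Equiv.swap x y * l.prod) + 1 := by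
      have h2 : cnt l.prod⁻¹ ≤ cnt (l.prod⁻¹ * Equiv.swap x y) + 1 := cnt_mul_swap_ge hxy
      have h3 : l.prod⁻¹ * Equiv.swap x y = (Equiv.swap x y * l.prod)⁻¹ := by
        rw [mul_inv_rev, Equiv.swap_inv]
      rw [h3, cnt_inv, cnt_inv] at h2
      exact h2
    simp only [List.prod_cons, List.length_cons]
    omega

lemma exists_swap_list : ∀ (k : ℕ) (σ : Perm α), Fintype.card α = cnt σ + k →
    ∃ l : List (Perm α), (∀ t ∈ l, t.IsSwap) ∧ l.prod = σ ∧ l.length = k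
  | 0, σ, h => by
    have : σ = 1 := eq_one_of_cnt σ (by omega)
    exact ⟨[], by simp, by simp [this], rfl⟩
  | (k+1), σ, h => by
    have hσ1 : σ ≠ 1 := by
      intro h1
      rw [h1, cnt_one] at h
      omega
    obtain ⟨x, hx⟩ : ∃ x, σ x ≠ x := by
      by_contra hc
      push_neg at hc
      exact hσ1 (Equiv.ext hc)
    have hsc : σ.SameCycle x (σ x) := sameCycle_apply_right.mpr (SameCycle.refl σ x)
    have hsplit := split_cnt (Ne.symm hx) hsc
    obtain ⟨l, hl1, hl2, hl3⟩ := exists_swap_list k (σ * Equiv.swap x (σ x)) (by omega)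
    refine ⟨l ++ [Equiv.swap x (σ x)], ?_, ?_, ?_⟩
    · intro t ht
      rcases List.mem_append.mp ht with ht | ht
      · exact hl1 t ht
      · simp at ht
        exact ht ▸ ⟨x, σ x, Ne.symm hx, rfl⟩
    · rw [List.prod_append, hl2]
      simp [mul_assoc]
    · simp [hl3]

lemma swapLength_add_cnt {n : ℕ} (σ : Perm (Fin n)) : swapLength n σ + cnt σ = n := by
  have hne : {k | ∃ l : List (Perm (Fin n)),
      l.length = k ∧ (∀ t ∈ l, t.IsSwap) ∧ l.prod = σ}.Nonempty := by
    obtain ⟨l, hp, hsw⟩ := (truncSwapFactors σ).out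
    exact ⟨l.length, l, rfl, hsw, hp⟩
  have hcle : cnt σ ≤ n := by simpa using cnt_le_card σ
  have hub : swapLength n σ ≤ n - cnt σ := by
    obtain ⟨l, hl1, hl2, hl3⟩ := exists_swap_list (n - cnt σ) σ (by simp; omega)
    exact hl3 ▸ Nat.sInf_le ⟨l, rfl, hl1, hl2⟩
  have hlb : n ≤ cnt σ + swapLength n σ := by
    obtain ⟨l, hl1, hl2, hl3⟩ := Nat.sInf_mem hne
    have := card_le_of_swap_list l hl2
    rw [hl3, hl1] at this
    simpa [swapLength] using this
  omega

lemma swapLength_spec {n : ℕ} (σ : Perm (Fin n)) :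
    ∃ l : List (Perm (Fin n)), (∀ t ∈ l, t.IsSwap) ∧ l.prod = σ ∧
      l.length = swapLength n σ := by
  have hne : {k | ∃ l : List (Perm (Fin n)),
      l.length = k ∧ (∀ t ∈ l, t.IsSwap) ∧ l.prod = σ}.Nonempty := by
    obtain ⟨l, hp, hsw⟩ := (truncSwapFactors σ).out
    exact ⟨l.length, l, rfl, hsw, hp⟩
  obtain ⟨l, h1, h2, h3⟩ := Nat.sInf_mem hne
  exact ⟨l, h2, h3, h1⟩

lemma swapLength_subadd {n : ℕ} (σ τ : Perm (Fin n)) :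
    swapLength n (σ * τ) ≤ swapLength n σ + swapLength n τ := by
  obtain ⟨l1, h11, h12, h13⟩ := swapLength_spec σ
  obtain ⟨l2, h21, h22, h23⟩ := swapLength_spec τ
  have : swapLength n (σ * τ) ≤ (l1 ++ l2).length := by
    apply Nat.sInf_le
    refine ⟨l1 ++ l2, rfl, ?_, ?_⟩
    · intro t ht
      rcases List.mem_append.mp ht with ht | ht
      exacts [h11 t ht, h21 t ht]
    · rw [List.prod_append, h12, h22]
  simpa [h13, h23] using this


lemma sameCycle_finRotate_all {m : ℕ} (i j : Fin (m+1)) :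
    (finRotate (m+1)).SameCycle i j := by
  cases m with
  | zero =>
    have : i = j := Fin.ext (by omega)
    exact this ▸ SameCycle.refl _ _
  | succ m =>
    have hmove : ∀ k : Fin (m+2), finRotate (m+2) k ≠ k := by
      intro k h
      rw [finRotate_succ_apply] at h
      have h1 : (1 : Fin (m+2)) = 0 := by
        have := congrArg (fun z => z - k) h
        simpa [add_sub_cancel_left] using this
      have := congrArg Fin.val h1
      simp [Fin.val_one] at this
    obtain ⟨x, hx, hall⟩ := isCycle_finRotate (n := m)
    exact (hall (hmove i)).symm.trans (hall (hmove j))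

lemma cnt_finRotate {n : ℕ} (hn : 1 ≤ n) : cnt (finRotate n) = 1 := by
  obtain ⟨m, rfl⟩ : ∃ m, n = m + 1 := ⟨n - 1, by omega⟩
  have hsub : Subsingleton (Quotient (SameCycle.setoid (finRotate (m+1)))) := by
    constructor
    intro a b
    induction a using Quotient.inductionOn with | h a =>
    induction b using Quotient.inductionOn with | h b =>
    exact Quotient.sound (sameCycle_finRotate_all a b)
  have hne : Nonempty (Quotient (SameCycle.setoid (finRotate (m+1)))) :=
    ⟨Quotient.mk _ 0⟩
  exact Nat.card_eq_one_iff_unique.mpr ⟨hsub, hne⟩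

lemma finRotate_noncrossing {n : ℕ} (hn : 1 ≤ n) : IsNoncrossingPerm (finRotate n) := by
  obtain ⟨m, rfl⟩ : ∃ m, n = m + 1 := ⟨n - 1, by omega⟩
  constructor
  · intro i j k l _ _ _ _ _
    exact sameCycle_finRotate_all i j
  · intro i
    constructor
    · rintro ⟨j, _, hij⟩
      have hlast : i ≠ Fin.last m := by
        rintro rfl
        exact absurd (Fin.le_last j) (not_le.mpr hij)
      have hval : (finRotate (m+1) i : ℕ) = i.val + 1 := coe_finRotate_of_ne_last hlast
      constructor
      · exact ⟨sameCycle_finRotate_all i _, by rw [Fin.lt_def, hval]; omega⟩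
      · rintro b ⟨_, hib⟩
        rw [Fin.le_def, hval]
        rw [Fin.lt_def] at hib
        omega
    · intro hnex
      have hlast : i = Fin.last m := by
        by_contra h
        have hlt : i.val < m := by
          have := i.isLt
          have : i.val ≠ m := fun hc => h (Fin.ext hc)
          omega
        exact hnex ⟨⟨i.val + 1, by omega⟩, sameCycle_finRotate_all i _,
          by rw [Fin.lt_def]; simp⟩
      rw [hlast, finRotate_last]
      refine ⟨?_, fun b _ => Fin.zero_le b⟩
      exact sameCycle_finRotate_all _ 0


section Transfer

lemma transfer {n : ℕ} {σ : Perm (Fin n)} {x y : Fin n} (hxy : x < y)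
    (hns : ¬ σ.SameCycle x y) (hnc : IsNoncrossingPerm (σ * Equiv.swap x y)) :
    IsNoncrossingPerm σ := by
  have hxyne : x ≠ y := ne_of_lt hxy
  set σ' := σ * Equiv.swap x y with hσ'
  have hσeq : ∀ a : Fin n, a ≠ x → a ≠ y → σ a = σ' a := by
    intro a hax hay
    simp [hσ', Perm.mul_apply, Equiv.swap_apply_of_ne_of_ne hax hay]
  have hsxy : σ x = σ' y := by simp [hσ', Perm.mul_apply]
  have hsyx : σ y = σ' x := by simp [hσ', Perm.mul_apply]
  have hchar : ∀ a b, σ'.SameCycle a b ↔ R σ x y a b := merge_char hxyne hns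
  have hmono : ∀ {a b : Fin n}, σ.SameCycle a b → σ'.SameCycle a b :=
    fun h => mono_mul_swap hxyne hns h
  have hBxy : σ'.SameCycle x y := sameCycle_mul_swap_of_not hxyne hns
  have hF2 : ∀ {a b : Fin n}, σ'.SameCycle a b → ¬ σ'.SameCycle x a → σ.SameCycle a b := by
    intro a b hab hax
    rcases (hchar a b).mp hab with h | ⟨h1, h2⟩ | ⟨h1, h2⟩
    · exact h
    · exact absurd (hmono h1).symm hax
    · exact absurd ((hmono h1).trans hBxy.symm).symm hax
  have hF3 : ∀ {a : Fin n}, σ'.SameCycle x a → σ.SameCycle x a ∨ σ.SameCycle y a := by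
    intro a ha
    rcases (hchar x a).mp ha with h | ⟨h1, h2⟩ | ⟨h1, h2⟩
    · exact Or.inl h
    · exact Or.inr h2.symm
    · exact absurd h1 hns
  have hincx : IsLeast {j | σ'.SameCycle x j ∧ x < j} (σ' x) := (hnc.2 x).1 ⟨y, hBxy, hxy⟩
  -- C1 : the orbit of y is contained in (x, y]
  have hC1 : ∀ b : Fin n, σ.SameCycle y b → σ'.SameCycle x b ∧ x < b ∧ b ≤ y := by
    have closure : ∀ b : Fin n, (σ'.SameCycle x b ∧ x < b ∧ b ≤ y) →
        (σ'.SameCycle x (σ b) ∧ x < σ b ∧ σ b ≤ y) := by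
      rintro b ⟨hbB, hxb, hby⟩
      by_cases hbey : b = y
      · rw [hbey, hsyx]
        exact ⟨sameCycle_apply_right.mpr (SameCycle.refl σ' x), hincx.1.2,
          hincx.2 (show σ'.SameCycle x y ∧ x < y from ⟨hBxy, hxy⟩)⟩
      · have hbx : b ≠ x := ne_of_gt hxb
        rw [hσeq b hbx hbey]
        have hbltY : b < y := lt_of_le_of_ne hby hbey
        have hbY : σ'.SameCycle b y := hbB.symm.trans hBxy
        have hincb : IsLeast {j | σ'.SameCycle b j ∧ b < j} (σ' b) :=
          (hnc.2 b).1 ⟨y, hbY, hbltY⟩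
        exact ⟨hbB.trans (sameCycle_apply_right.mpr (SameCycle.refl σ' b)),
          lt_trans hxb hincb.1.2,
          hincb.2 (show σ'.SameCycle b y ∧ b < y from ⟨hbY, hbltY⟩)⟩
    have pows : ∀ m : ℕ, σ'.SameCycle x ((σ ^ m) y) ∧ x < (σ ^ m) y ∧ (σ ^ m) y ≤ y := by
      intro m; induction m with
      | zero =>
        refine ⟨?_, ?_, ?_⟩
        · simpa using hBxy
        · simpa using hxy
        · simpa using le_refl y
      | succ m ih =>
        rw [pow_succ', Perm.mul_apply]
        exact closure _ ih
    intro b hb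
    obtain ⟨m, _, hm⟩ := hb.exists_pow_eq'
    exact hm ▸ pows m
  -- C2 : the orbit of x avoids (x, y]
  have hC2 : ∀ b : Fin n, σ.SameCycle x b → σ'.SameCycle x b ∧ (b ≤ x ∨ y < b) := by
    have closure : ∀ b : Fin n, (σ'.SameCycle x b ∧ (b ≤ x ∨ y < b)) →
        (σ'.SameCycle x (σ b) ∧ (σ b ≤ x ∨ y < σ b)) := by
      rintro b ⟨hbB, hbo⟩
      by_cases hbx : b = x
      · rw [hbx, hsxy]
        refine ⟨hBxy.trans (sameCycle_apply_right.mpr (SameCycle.refl σ' y)), ?_⟩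
        by_cases hey : ∃ j, σ'.SameCycle y j ∧ y < j
        · exact Or.inr (((hnc.2 y).1 hey).1.2)
        · exact Or.inl (((hnc.2 y).2 hey).2 hBxy.symm)
      · have hbey : b ≠ y := by
          rintro rfl
          rcases hbo with h | h
          · exact absurd h (not_le.mpr hxy)
          · exact absurd h (lt_irrefl b)
        rw [hσeq b hbx hbey]
        have hmemB : σ'.SameCycle x (σ' b) :=
          hbB.trans (sameCycle_apply_right.mpr (SameCycle.refl σ' b))
        rcases hbo with h | h
        · have hblt : b < x := lt_of_le_of_ne h hbx
          have hincb : IsLeast {j | σ'.SameCycle b j ∧ b < j} (σ' b) :=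
            (hnc.2 b).1 ⟨x, hbB.symm, hblt⟩
          exact ⟨hmemB, Or.inl (hincb.2 (show σ'.SameCycle b x ∧ b < x from ⟨hbB.symm, hblt⟩))⟩
        · by_cases hey : ∃ j, σ'.SameCycle b j ∧ b < j
          · exact ⟨hmemB, Or.inr (lt_trans h ((hnc.2 b).1 hey).1.2)⟩
          · exact ⟨hmemB, Or.inl (((hnc.2 b).2 hey).2 hbB.symm)⟩
    have pows : ∀ m : ℕ, σ'.SameCycle x ((σ ^ m) x) ∧ ((σ ^ m) x ≤ x ∨ y < (σ ^ m) x) := by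
      intro m; induction m with
      | zero =>
        refine ⟨?_, Or.inl ?_⟩
        · simpa using SameCycle.refl σ' x
        · simp
      | succ m ih =>
        rw [pow_succ', Perm.mul_apply]
        exact closure _ ih
    intro b hb
    obtain ⟨m, _, hm⟩ := hb.exists_pow_eq'
    exact hm ▸ pows m
  constructor
  · -- noncrossing of orbits
    intro i j k l hij hjk hkl hik hjl
    have hij' := hnc.1 i j k l hij hjk hkl (hmono hik) (hmono hjl)
    by_cases hiB : σ'.SameCycle x i
    · have hjB : σ'.SameCycle x j := hiB.trans hij'
      rcases hF3 hiB with hi | hi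
      · rcases hF3 hjB with hj | hj
        · exact hi.symm.trans hj
        · have hkJ : σ.SameCycle x k := hi.trans hik
          have hlI := hC1 l (hj.trans hjl)
          have hjI := hC1 j hj
          rcases (hC2 k hkJ).2 with h' | h'
          · exact absurd (lt_trans hjI.2.1 hjk) (not_lt.mpr h')
          · exact absurd (lt_trans h' hkl) (not_lt.mpr hlI.2.2)
      · rcases hF3 hjB with hj | hj
        · have hkI := hC1 k (hi.trans hik)
          have hiI := hC1 i hi
          rcases (hC2 j hj).2 with h' | h'
          · exact absurd (lt_trans hiI.2.1 hij) (not_lt.mpr h')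
          · exact absurd (lt_trans h' hjk) (not_lt.mpr hkI.2.2)
        · exact hi.symm.trans hj
    · exact hF2 hij' hiB
  · -- increasing cycles
    intro i
    by_cases hiB : σ'.SameCycle x i
    · by_cases hix : i = x
      · subst hix
        constructor
        · rintro ⟨j, hjsc, hjlt⟩
          have hjgt : y < j := by
            rcases (hC2 j hjsc).2 with h' | h'
            · exact absurd hjlt (not_lt.mpr h')
            · exact h'
          have hincy := (hnc.2 y).1 ⟨j, hBxy.symm.trans (hmono hjsc), hjgt⟩
          rw [hsxy]
          refine ⟨⟨?_, lt_trans hxy hincy.1.2⟩, ?_⟩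
          · rw [← hsxy]
            exact sameCycle_apply_right.mpr (SameCycle.refl σ i)
          · rintro b ⟨hsc, hlt⟩
            have hbgt : y < b := by
              rcases (hC2 b hsc).2 with h' | h'
              · exact absurd hlt (not_lt.mpr h')
              · exact h'
            exact hincy.2 ⟨hBxy.symm.trans (hmono hsc), hbgt⟩
        · intro hnex
          have hney : ¬ ∃ b, σ'.SameCycle y b ∧ y < b := by
            rintro ⟨b, hbsc, hblt⟩
            rcases hF3 (hBxy.trans hbsc) with h | h
            · exact hnex ⟨b, h, lt_trans hxy hblt⟩
            · exact absurd hblt (not_lt.mpr (hC1 b h).2.2)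
          have hincy := (hnc.2 y).2 hney
          rw [hsxy]
          refine ⟨?_, ?_⟩
          · rw [← hsxy]
            exact sameCycle_apply_right.mpr (SameCycle.refl σ i)
          · intro b hsc
            exact hincy.2 (hBxy.symm.trans (hmono hsc))
      · by_cases hiy : i = y
        · subst hiy
          constructor
          · rintro ⟨j, hjsc, hjlt⟩
            exact absurd hjlt (not_lt.mpr (hC1 j hjsc).2.2)
          · intro _
            rw [hsyx]
            refine ⟨?_, ?_⟩
            · rw [← hsyx]
              exact sameCycle_apply_right.mpr (SameCycle.refl σ i)
            · intro b hsc
              exact hincx.2 ⟨hBxy.trans (hmono hsc), (hC1 b hsc).2.1⟩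
        · have hσi : σ i = σ' i := hσeq i hix hiy
          constructor
          · rintro ⟨j, hjsc, hjlt⟩
            have hinci := (hnc.2 i).1 ⟨j, hmono hjsc, hjlt⟩
            rw [hσi]
            refine ⟨⟨?_, hinci.1.2⟩, ?_⟩
            · rw [← hσi]
              exact sameCycle_apply_right.mpr (SameCycle.refl σ i)
            · rintro b ⟨hsc, hlt⟩
              exact hinci.2 ⟨hmono hsc, hlt⟩
          · intro hnex
            have hiJ : σ.SameCycle x i := by
              rcases hF3 hiB with h | h
              · exact h
              · exact absurd ⟨y, h.symm, lt_of_le_of_ne (hC1 i h).2.2 hiy⟩ hnex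
            have hnoB : ¬ ∃ b, σ'.SameCycle i b ∧ i < b := by
              rintro ⟨b, hbsc, hblt⟩
              rcases hF3 (hiB.trans hbsc) with h | h
              · exact hnex ⟨b, hiJ.symm.trans h, hblt⟩
              · rcases (hC2 i hiJ).2 with h' | h'
                · exact hnex ⟨x, hiJ.symm, lt_of_le_of_ne h' hix⟩
                · exact absurd hblt (not_lt.mpr ((hC1 b h).2.2.trans h'.le))
            have hinci := (hnc.2 i).2 hnoB
            rw [hσi]
            refine ⟨?_, ?_⟩
            · rw [← hσi]
              exact sameCycle_apply_right.mpr (SameCycle.refl σ i)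
            · intro b hsc
              exact hinci.2 (hmono hsc)
    · have hix : i ≠ x := by rintro rfl; exact hiB (SameCycle.refl σ' i)
      have hiy : i ≠ y := by rintro rfl; exact hiB hBxy
      have horb : ∀ j, σ.SameCycle i j ↔ σ'.SameCycle i j :=
        fun j => ⟨fun h => hmono h, fun h => hF2 h (fun hc => hiB hc)⟩
      have hσi : σ i = σ' i := hσeq i hix hiy
      have hsets1 : {j | σ.SameCycle i j ∧ i < j} = {j | σ'.SameCycle i j ∧ i < j} :=
        Set.ext fun j => and_congr_left' (horb j)
      have hsets2 : {j | σ.SameCycle i j} = {j | σ'.SameCycle i j} :=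
        Set.ext fun j => horb j
      constructor
      · rintro ⟨j, hjsc, hjlt⟩
        rw [hσi, hsets1]
        exact (hnc.2 i).1 ⟨j, (horb j).mp hjsc, hjlt⟩
      · intro hnex
        rw [hσi, hsets2]
        refine (hnc.2 i).2 ?_
        rintro ⟨j, hjsc, hjlt⟩
        exact hnex ⟨j, (horb j).mpr hjsc, hjlt⟩

end Transfer

end NCAux

/-- Every permutation on a geodesic from the identity to the `n`-cycle
`s = finRotate n` is a noncrossing permutation. -/
theorem mem_interval_noncrossing (n : ℕ) (hn : 1 ≤ n) (σ : Equiv.Perm (Fin n))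
    (h : swapLength n σ + swapLength n (σ⁻¹ * finRotate n) = n - 1) :
    IsNoncrossingPerm σ := by
  open NCAux in
  suffices H : ∀ m : ℕ, ∀ σ : Equiv.Perm (Fin n), swapLength n (σ⁻¹ * finRotate n) = m →
      swapLength n σ + swapLength n (σ⁻¹ * finRotate n) = n - 1 → IsNoncrossingPerm σ by
    exact H _ σ rfl h
  intro m
  induction m using Nat.strong_induction_on with
  | _ m IH =>
  intro σ hm h
  by_cases hπ1 : σ⁻¹ * finRotate n = 1
  · have hσs : σ = finRotate n := by
      rwa [inv_mul_eq_one] at hπ1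
    rw [hσs]
    exact NCAux.finRotate_noncrossing hn
  · obtain ⟨x, hx⟩ : ∃ x, (σ⁻¹ * finRotate n) x ≠ x := by
      by_contra hc
      push_neg at hc
      exact hπ1 (Equiv.ext hc)
    set π := σ⁻¹ * finRotate n with hπ
    set y := π x with hy
    have hxy : x ≠ y := Ne.symm hx
    have hπsc : π.SameCycle x y := by
      rw [hy]
      exact sameCycle_apply_right.mpr (SameCycle.refl π x)
    have e1 := NCAux.swapLength_add_cnt σ
    have e2 := NCAux.swapLength_add_cnt π
    have es := NCAux.swapLength_add_cnt (finRotate n)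
    have ecs : NCAux.cnt (finRotate n) = 1 := NCAux.cnt_finRotate hn
    have hc2 : NCAux.cnt (Equiv.swap x y * π) = NCAux.cnt π + 1 := by
      have hπinv : (Equiv.swap x y * π)⁻¹ = π⁻¹ * Equiv.swap x y := by
        rw [mul_inv_rev, Equiv.swap_inv]
      calc NCAux.cnt (Equiv.swap x y * π) = NCAux.cnt ((Equiv.swap x y * π)⁻¹) :=
            (NCAux.cnt_inv _).symm
        _ = NCAux.cnt (π⁻¹ * Equiv.swap x y) := by rw [hπinv]
        _ = NCAux.cnt π⁻¹ + 1 := NCAux.split_cnt hxy (sameCycle_inv.mpr hπsc)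
        _ = NCAux.cnt π + 1 := by rw [NCAux.cnt_inv]
    have hprods : σ * π = finRotate n := by
      rw [hπ, mul_inv_cancel_left]
    have hprod : (σ * Equiv.swap x y) * (Equiv.swap x y * π) = finRotate n := by
      rw [← hprods]
      rw [mul_assoc, ← mul_assoc (Equiv.swap x y), Equiv.swap_mul_self, one_mul]
    have hnsσ : ¬ σ.SameCycle x y := by
      intro hsc
      have hc1 : NCAux.cnt (σ * Equiv.swap x y) = NCAux.cnt σ + 1 := NCAux.split_cnt hxy hsc
      have e1' := NCAux.swapLength_add_cnt (σ * Equiv.swap x y)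
      have e2' := NCAux.swapLength_add_cnt (Equiv.swap x y * π)
      have hsub := NCAux.swapLength_subadd (σ * Equiv.swap x y) (Equiv.swap x y * π)
      rw [hprod] at hsub
      omega
    have hc1 : NCAux.cnt σ = NCAux.cnt (σ * Equiv.swap x y) + 1 := NCAux.merge_cnt hxy hnsσ
    have e1' := NCAux.swapLength_add_cnt (σ * Equiv.swap x y)
    have e2' := NCAux.swapLength_add_cnt (Equiv.swap x y * π)
    have hπ'eq : (σ * Equiv.swap x y)⁻¹ * finRotate n = Equiv.swap x y * π := by
      rw [mul_inv_rev, Equiv.swap_inv, mul_assoc, ← hπ]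
    have hm1 : 1 ≤ m := by
      rcases Nat.eq_zero_or_pos m with h0 | h0
      · exfalso
        rw [h0] at hm
        have : NCAux.cnt π = n := by omega
        exact hπ1 (NCAux.eq_one_of_cnt π (by simp [this]))
      · exact h0
    have hm' : swapLength n ((σ * Equiv.swap x y)⁻¹ * finRotate n) = m - 1 := by
      rw [hπ'eq]; omega
    have hsum' : swapLength n (σ * Equiv.swap x y)
        + swapLength n ((σ * Equiv.swap x y)⁻¹ * finRotate n) = n - 1 := by
      rw [hπ'eq]; omega
    have hnc' : IsNoncrossingPerm (σ * Equiv.swap x y) :=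
      IH (m - 1) (by omega) (σ * Equiv.swap x y) hm' hsum'
    rcases lt_or_gt_of_ne hxy with hlt | hgt
    · exact NCAux.transfer hlt hnsσ hnc'
    · refine NCAux.transfer hgt (fun hc => hnsσ hc.symm) ?_
      rwa [Equiv.swap_comm y x]
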